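/- Let (M_n)_{n ≥ m} be a nonnegative reverse submartingale with sup_n E[M_n^β] dominated by E[M_m^β] for some β > 1. Then E[ sup_{n ≥ m} M_n ] ≤ 1 + E[M_m^β]/(β - 1). -/

import Mathlib

open MeasureTheory

open MeasureTheory Finset
open scoped ENNReal NNReal

lemma aux_tail_bound {Ω : Type*} {m0 : MeasurableSpace Ω} (μ : Measure Ω) [IsProbabilityMeasure μ]
    (m N : ℕ) (hmN : m ≤ N) (M : ℕ → Ω → ℝ) (ℱ : Filtration ℕᵒᵈ m0)
    (hrsub : Submartingale (fun n : ℕᵒᵈ => M (OrderDual.ofDual n)) ℱ μ)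
    (hnonneg : ∀ n ω, 0 ≤ M n ω) (β : ℝ) (hβ : 1 < β)
    (hE : ∫⁻ ω, ENNReal.ofReal (M m ω ^ β) ∂μ ≠ ⊤) (t : ℝ) (ht : 1 ≤ t) :
    μ {ω | t ≤ (Finset.Icc m N).sup' (Finset.nonempty_Icc.2 hmN) fun n => M n ω} ≤
      (∫⁻ ω, ENNReal.ofReal (M m ω ^ β) ∂μ) / ENNReal.ofReal (t ^ β) := by
  have ht0 : (0 : ℝ) < t := lt_of_lt_of_le one_pos ht
  set E := ∫⁻ ω, ENNReal.ofReal (M m ω ^ β) ∂μ with hEdef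
  -- reindexed process
  set a : ℕ → ℕ := fun k => max m (N - k) with ha
  have ham : ∀ k, m ≤ a k := fun k => le_max_left _ _
  have haN : ∀ k, a k ≤ N := fun k => max_le hmN (Nat.sub_le N k)
  have hanti : ∀ ⦃i j : ℕ⦄, i ≤ j → a j ≤ a i := fun i j hij =>
    max_le_max le_rfl (Nat.sub_le_sub_left hij N)
  set 𝒢 : Filtration ℕ m0 :=
    { seq := fun k => ℱ (OrderDual.toDual (a k))
      mono' := fun i j hij => ℱ.mono (by exact_mod_cast hanti hij)
      le' := fun k => ℱ.le _ } with h𝒢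
  set g : ℕ → Ω → ℝ := fun k => M (a k) with hg
  have hgsub : Submartingale g 𝒢 μ := by
    refine ⟨fun k => hrsub.stronglyAdapted (OrderDual.toDual (a k)), fun i j hij => ?_,
      fun k => hrsub.integrable (OrderDual.toDual (a k))⟩
    exact hrsub.2.1 (OrderDual.toDual (a i)) (OrderDual.toDual (a j)) (by exact_mod_cast hanti hij)
  have hgnonneg : 0 ≤ g := fun k ω => hnonneg _ _
  -- sup' equality
  have hsup : ∀ ω, ((Finset.range (N + 1)).sup' Finset.nonempty_range_add_one fun k => g k ω)
      = (Finset.Icc m N).sup' (Finset.nonempty_Icc.2 hmN) fun n => M n ω := by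
    intro ω
    apply le_antisymm
    · refine Finset.sup'_le _ _ fun k _ => ?_
      exact Finset.le_sup' (f := fun n => M n ω) (Finset.mem_Icc.2 ⟨ham k, haN k⟩)
    · refine Finset.sup'_le _ _ fun n hn => ?_
      rw [Finset.mem_Icc] at hn
      have h1 : a (N - n) = n := by
        simp only [ha]
        rw [Nat.sub_sub_self hn.2, max_eq_right hn.1]
      have h2 : N - n ∈ Finset.range (N + 1) := Finset.mem_range.2 (Nat.lt_succ_of_le (Nat.sub_le _ _))
      calc M n ω = g (N - n) ω := by rw [hg]; simp [h1]
        _ ≤ _ := Finset.le_sup' (f := fun k => g k ω) h2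
  have hgN : g N = M m := by
    rw [hg]; simp [ha]
  set A := {ω | t ≤ (Finset.Icc m N).sup' (Finset.nonempty_Icc.2 hmN) fun n => M n ω} with hA
  have hmeasM : ∀ n, Measurable (M n) := fun n =>
    ((hrsub.stronglyMeasurable (OrderDual.toDual n)).mono (ℱ.le _)).measurable
  have hsupmeas : Measurable fun ω => (Finset.Icc m N).sup' (Finset.nonempty_Icc.2 hmN) fun n => M n ω := by
    have := Finset.measurable_sup' (Finset.nonempty_Icc.2 hmN) (fun n (_ : n ∈ Finset.Icc m N) => hmeasM n)
    convert this using 1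
    ext ω
    simp [Finset.sup'_apply]
  have hAmeas : MeasurableSet A := measurableSet_le measurable_const hsupmeas
  -- Doob maximal inequality
  have hmax := maximal_ineq hgsub hgnonneg (ε := t.toNNReal) N
  have hcoe : (t.toNNReal : ℝ) = t := Real.coe_toNNReal t ht0.le
  have hsetEq : {ω | (t.toNNReal : ℝ) ≤ (Finset.range (N + 1)).sup' Finset.nonempty_range_add_one
      fun k => g k ω} = A := by
    ext ω; simp only [Set.mem_setOf_eq, hA, hsup ω, hcoe]
  rw [hsetEq, hgN] at hmax
  -- rewrite the right side as a lintegral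
  have hint : ENNReal.ofReal (∫ ω in A, M m ω ∂μ) = ∫⁻ ω in A, ENNReal.ofReal (M m ω) ∂μ :=
    MeasureTheory.ofReal_integral_eq_lintegral_ofReal
      ((hrsub.integrable (OrderDual.toDual m)).integrableOn)
      (ae_of_all _ fun ω => hnonneg m ω)
  rw [hint] at hmax
  have hmax' : ENNReal.ofReal t * μ A ≤ ∫⁻ ω in A, ENNReal.ofReal (M m ω) ∂μ := by
    exact hmax
  -- Hölder
  set q : ℝ := β / (β - 1) with hq
  have hconj : Real.HolderConjugate β q := Real.HolderConjugate.conjExponent hβ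
  have hβ0 : (0 : ℝ) < β := lt_trans one_pos hβ
  have hβ1 : (0 : ℝ) < β - 1 := by linarith
  have hholder := ENNReal.lintegral_mul_le_Lp_mul_Lq μ hconj
    (f := fun ω => ENNReal.ofReal (M m ω)) (g := fun ω => A.indicator (1 : Ω → ℝ≥0∞) ω)
    ((ENNReal.measurable_ofReal.comp (hmeasM m)).aemeasurable)
    ((measurable_one.indicator hAmeas).aemeasurable)
  have hfg : ∫⁻ ω, (((fun ω => ENNReal.ofReal (M m ω)) * (fun ω => A.indicator (1 : Ω → ℝ≥0∞) ω)) ω) ∂μ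
      = ∫⁻ ω in A, ENNReal.ofReal (M m ω) ∂μ := by
    rw [← lintegral_indicator hAmeas]
    congr 1
    ext ω
    by_cases hω : ω ∈ A <;> simp [hω]
  have hfp : ∫⁻ ω, ((fun ω => ENNReal.ofReal (M m ω)) ω) ^ β ∂μ = E := by
    rw [hEdef]
    congr 1
    ext ω
    rw [ENNReal.ofReal_rpow_of_nonneg (hnonneg m ω) hβ0.le]
  have hgq : ∫⁻ ω, ((fun ω => A.indicator (1 : Ω → ℝ≥0∞) ω) ω) ^ q ∂μ = μ A := by
    simp only []
    have : ∀ ω, (A.indicator (1 : Ω → ℝ≥0∞) ω) ^ q = A.indicator 1 ω := by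
      intro ω
      by_cases hω : ω ∈ A <;>
        simp [hω, ENNReal.zero_rpow_of_pos hconj.symm.pos]
    simp_rw [this]
    exact lintegral_indicator_one hAmeas
  rw [hfg, hfp, hgq] at hholder
  have hkey : ENNReal.ofReal t * μ A ≤ E ^ (1 / β) * μ A ^ (1 / q) := hmax'.trans hholder
  -- algebra
  by_cases hA0 : μ A = 0
  · rw [hA0]; exact zero_le
  have hAlt : μ A ≠ ⊤ := measure_ne_top μ A
  have hq' : (1 / q) * β = β - 1 := by
    rw [hq]; field_simp
  have hraise := ENNReal.rpow_le_rpow hkey hβ0.le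
  rw [ENNReal.mul_rpow_of_nonneg _ _ hβ0.le, ENNReal.mul_rpow_of_nonneg _ _ hβ0.le,
    ← ENNReal.rpow_mul, ← ENNReal.rpow_mul, one_div_mul_cancel hβ0.ne', ENNReal.rpow_one,
    hq'] at hraise
  have hsplit : μ A ^ β = μ A ^ (β - 1) * μ A := by
    have h1 : μ A ^ (β - 1) * μ A ^ (1 : ℝ) = μ A ^ β := by
      rw [← ENNReal.rpow_add _ _ hA0 hAlt]; norm_num
    rw [← h1, ENNReal.rpow_one]
  rw [hsplit] at hraise
  have hcancel : ENNReal.ofReal t ^ β * μ A ≤ E := by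
    have hne0 : μ A ^ (β - 1) ≠ 0 := (ENNReal.rpow_pos (pos_iff_ne_zero.2 hA0) hAlt).ne'
    have hnetop : μ A ^ (β - 1) ≠ ⊤ := ENNReal.rpow_ne_top_of_nonneg hβ1.le hAlt
    rw [← ENNReal.mul_le_mul_iff_left hne0 hnetop]
    calc ENNReal.ofReal t ^ β * μ A * μ A ^ (β - 1)
        = ENNReal.ofReal t ^ β * (μ A ^ (β - 1) * μ A) := by ring
      _ ≤ E * μ A ^ (β - 1) := hraise
  have hne : ENNReal.ofReal (t ^ β) ≠ 0 := by
    simp only [ne_eq, ENNReal.ofReal_eq_zero, not_le]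
    exact Real.rpow_pos_of_pos ht0 β
  rw [ENNReal.le_div_iff_mul_le (Or.inl hne) (Or.inl ENNReal.ofReal_ne_top)]
  rw [mul_comm, ← ENNReal.ofReal_rpow_of_pos ht0]
  exact hcancel


/-- If `(M n)_{n ≥ m}` is a nonnegative reverse submartingale (a submartingale
with respect to the reversed order on `ℕ` and a decreasing filtration) with
`E[M n ^ β] ≤ E[M m ^ β]` for all `n ≥ m`, where `β > 1`, then
`E[sup_{n ≥ m} M n] ≤ 1 + E[M m ^ β] / (β - 1)`. -/
theorem stmt_4 {Ω : Type*} {m0 : MeasurableSpace Ω} (μ : Measure Ω) [IsProbabilityMeasure μ]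
    (m : ℕ) (M : ℕ → Ω → ℝ)
    (ℱ : Filtration ℕᵒᵈ m0)
    (hrsub : Submartingale (fun n : ℕᵒᵈ => M (OrderDual.ofDual n)) ℱ μ)
    (hnonneg : ∀ n ω, 0 ≤ M n ω)
    (β : ℝ) (hβ : 1 < β)
    (hdom : ∀ n, m ≤ n →
      ∫⁻ ω, ENNReal.ofReal (M n ω ^ β) ∂μ ≤ ∫⁻ ω, ENNReal.ofReal (M m ω ^ β) ∂μ) :
    ∫⁻ ω, (⨆ n : {k : ℕ // m ≤ k}, ENNReal.ofReal (M (n : ℕ) ω)) ∂μ ≤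
      1 + (∫⁻ ω, ENNReal.ofReal (M m ω ^ β) ∂μ) / ENNReal.ofReal (β - 1) := by
  set E := ∫⁻ ω, ENNReal.ofReal (M m ω ^ β) ∂μ with hEdef
  have hβ1 : (0 : ℝ) < β - 1 := by linarith
  by_cases hE : E = ⊤
  · rw [hE, ENNReal.top_div_of_ne_top ENNReal.ofReal_ne_top]
    simp
  have hmeasM : ∀ n, Measurable (M n) := fun n =>
    ((hrsub.stronglyMeasurable (OrderDual.toDual n)).mono (ℱ.le _)).measurable
  -- finite sups
  set hne : ∀ N : ℕ, (Finset.Icc m (m + N)).Nonempty :=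
    fun N => Finset.nonempty_Icc.2 (Nat.le_add_right m N) with hnedef
  set G : ℕ → Ω → ℝ := fun N ω => (Finset.Icc m (m + N)).sup' (hne N) fun n => M n ω with hGdef
  have hGmeas : ∀ N, Measurable fun ω => G N ω := by
    intro N
    have := Finset.measurable_sup' (hne N) (fun n (_ : n ∈ Finset.Icc m (m + N)) => hmeasM n)
    convert this using 1
    ext ω
    simp [Finset.sup'_apply]
    rfl
  have hGnonneg : ∀ N ω, 0 ≤ G N ω :=
    fun N ω => le_trans (hnonneg m ω)
      (Finset.le_sup' (f := fun n => M n ω) (Finset.mem_Icc.2 ⟨le_rfl, Nat.le_add_right m N⟩))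
  have hGmono : ∀ ω, Monotone fun N => ENNReal.ofReal (G N ω) := by
    intro ω i j hij
    refine ENNReal.ofReal_le_ofReal ?_
    refine Finset.sup'_le _ _ fun n hn => ?_
    rw [Finset.mem_Icc] at hn
    exact Finset.le_sup' (f := fun n => M n ω)
      (Finset.mem_Icc.2 ⟨hn.1, hn.2.trans (by omega)⟩)
  -- sup over subtype equals sup of finite sups
  have hiSup : ∀ ω, (⨆ n : {k : ℕ // m ≤ k}, ENNReal.ofReal (M (n : ℕ) ω))
      = ⨆ N, ENNReal.ofReal (G N ω) := by
    intro ω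
    apply le_antisymm
    · refine iSup_le fun n => ?_
      refine le_trans ?_ (le_iSup (fun N => ENNReal.ofReal (G N ω)) ((n : ℕ) - m))
      refine ENNReal.ofReal_le_ofReal ?_
      exact Finset.le_sup' (f := fun k => M k ω)
        (Finset.mem_Icc.2 ⟨n.2, by omega⟩)
    · refine iSup_le fun N => ?_
      obtain ⟨n₀, hn₀, hEq⟩ := Finset.exists_mem_eq_sup' (hne N) fun n => M n ω
      rw [Finset.mem_Icc] at hn₀
      calc ENNReal.ofReal (G N ω) = ENNReal.ofReal (M n₀ ω) := by rw [hGdef]; simp [hEq]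
        _ ≤ _ := le_iSup (fun n : {k : ℕ // m ≤ k} => ENNReal.ofReal (M (n : ℕ) ω)) ⟨n₀, hn₀.1⟩
  simp_rw [hiSup]
  rw [lintegral_iSup (f := fun N ω => ENNReal.ofReal (G N ω))
    (fun N => ENNReal.measurable_ofReal.comp (hGmeas N))
    (fun i j hij ω => hGmono ω hij)]
  refine iSup_le fun N => ?_
  -- layer cake for G N
  rw [MeasureTheory.lintegral_eq_lintegral_meas_lt μ (ae_of_all _ (hGnonneg N))
    (hGmeas N).aemeasurable]
  rw [← Set.Ioc_union_Ioi_eq_Ioi (zero_le_one (α := ℝ)),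
    lintegral_union measurableSet_Ioi (Set.Ioc_disjoint_Ioi le_rfl)]
  have h1 : ∫⁻ t in Set.Ioc (0 : ℝ) 1, μ {a | t < G N a} ≤ 1 := by
    calc ∫⁻ t in Set.Ioc (0 : ℝ) 1, μ {a | t < G N a}
        ≤ ∫⁻ _ in Set.Ioc (0 : ℝ) 1, 1 := setLIntegral_mono measurable_const
          fun t _ => prob_le_one
      _ = 1 := by rw [setLIntegral_one, Real.volume_Ioc]; norm_num
  have h2 : ∫⁻ t in Set.Ioi (1 : ℝ), μ {a | t < G N a} ≤ E / ENNReal.ofReal (β - 1) := by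
    have hb : ∀ t ∈ Set.Ioi (1 : ℝ), μ {a | t < G N a} ≤ E * ENNReal.ofReal t ^ (-β) := by
      intro t ht
      have ht1 : (1 : ℝ) ≤ t := le_of_lt ht
      have ht0 : (0 : ℝ) < t := lt_of_lt_of_le one_pos ht1
      have hsubset : {a | t < G N a} ⊆ {a | t ≤ G N a} := Set.setOf_subset_setOf.2 fun a => le_of_lt
      refine le_trans (measure_mono hsubset) ?_
      have := aux_tail_bound μ m (m + N) (Nat.le_add_right m N) M ℱ hrsub hnonneg β hβ hE t ht1
      refine le_trans this (le_of_eq ?_)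
      rw [div_eq_mul_inv, ← ENNReal.ofReal_rpow_of_pos ht0, ← ENNReal.rpow_neg]
    calc ∫⁻ t in Set.Ioi (1 : ℝ), μ {a | t < G N a}
        ≤ ∫⁻ t in Set.Ioi (1 : ℝ), E * ENNReal.ofReal t ^ (-β) := by
          refine setLIntegral_mono ?_ hb
          exact (ENNReal.measurable_ofReal.pow_const _).const_mul E
      _ = E * ∫⁻ t in Set.Ioi (1 : ℝ), ENNReal.ofReal t ^ (-β) := by
          rw [lintegral_const_mul' _ _ hE]
      _ = E / ENNReal.ofReal (β - 1) := by
          have hint : ∫⁻ t in Set.Ioi (1 : ℝ), ENNReal.ofReal t ^ (-β)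
              = ENNReal.ofReal (1 / (β - 1)) := by
            have heq : ∀ t ∈ Set.Ioi (1 : ℝ), ENNReal.ofReal t ^ (-β)
                = ENNReal.ofReal (t ^ (-β)) := fun t ht =>
              ENNReal.ofReal_rpow_of_pos (lt_trans one_pos ht)
            rw [setLIntegral_congr_fun measurableSet_Ioi heq]
            rw [← MeasureTheory.ofReal_integral_eq_lintegral_ofReal
              (integrableOn_Ioi_rpow_of_lt (by linarith) one_pos)
              ((ae_restrict_iff' measurableSet_Ioi).2 (ae_of_all _ fun t ht =>
                Real.rpow_nonneg (le_of_lt (lt_trans one_pos ht)) _))]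
            congr 1
            rw [integral_Ioi_rpow_of_lt (by linarith) one_pos]
            rw [Real.one_rpow]
            rw [show (-β + 1) = -(β - 1) by ring, neg_div_neg_eq, one_div]
          rw [hint, one_div, ENNReal.ofReal_inv_of_pos hβ1, ← div_eq_mul_inv]
  exact add_le_add h1 h2
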